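/- Let p be an odd prime, F = Q_p, and ψ an additive character of F of level 0. If a ∈ F has valuation ν(a) = -1, then the integral I(a,b) = ∫_{o^×} ψ(ax² + bx) dx is nonzero only if ν(b) ≥ -1. -/

import Mathlib

open MeasureTheory

/-- `ψ (n • y) = ψ y ^ n` for an additive character. -/
lemma psi_nsmul {p : ℕ} [Fact p.Prime] (ψ : ℚ_[p] → ℂ)
    (hψadd : ∀ x y : ℚ_[p], ψ (x + y) = ψ x * ψ y)
    (hψ0 : ψ 0 = 1) (y : ℚ_[p]) : ∀ n : ℕ, ψ ((n : ℚ_[p]) * y) = ψ y ^ n := by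
  intro n
  induction n with
  | zero => simpa using hψ0
  | succ n ih =>
    have : ((n + 1 : ℕ) : ℚ_[p]) * y = (n : ℚ_[p]) * y + y := by push_cast; ring
    rw [this, hψadd, ih, pow_succ]

/-- Any element of norm `p` has nontrivial character value. -/
lemma psi_ne_one_of_norm_eq {p : ℕ} [Fact p.Prime] (ψ : ℚ_[p] → ℂ)
    (hψadd : ∀ x y : ℚ_[p], ψ (x + y) = ψ x * ψ y)
    (hψtriv : ∀ x : ℚ_[p], ‖x‖ ≤ 1 → ψ x = 1)
    (hψnontriv : ∃ x : ℚ_[p], ‖x‖ ≤ (p : ℝ) ∧ ψ x ≠ 1)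
    (y : ℚ_[p]) (hy : ‖y‖ = (p : ℝ)) : ψ y ≠ 1 := by
  have hp : (1 : ℝ) < p := by exact_mod_cast (Fact.out : p.Prime).one_lt
  have hp0 : (0 : ℝ) < p := lt_trans one_pos hp
  obtain ⟨x₀, hx₀, hx₀ne⟩ := hψnontriv
  have hy0 : y ≠ 0 := by
    intro h; rw [h, norm_zero] at hy; exact absurd hy.symm (ne_of_gt hp0)
  intro hψy
  -- x₀ / y is a p-adic integer
  have hz : ‖x₀ / y‖ ≤ 1 := by
    rw [norm_div, hy, div_le_one hp0]; exact hx₀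
  set z : ℤ_[p] := ⟨x₀ / y, hz⟩ with hzdef
  set m : ℕ := z.appr 1 with hm
  have hspec : ‖z - (m : ℤ_[p])‖ ≤ (p : ℝ) ^ (-(1 : ℕ) : ℤ) := by
    rw [PadicInt.norm_le_pow_iff_mem_span_pow]
    exact PadicInt.appr_spec 1 z
  have hspec' : ‖x₀ / y - (m : ℚ_[p])‖ ≤ (p : ℝ)⁻¹ := by
    have hcoe : ((z - (m : ℤ_[p]) : ℤ_[p]) : ℚ_[p]) = x₀ / y - (m : ℚ_[p]) := by
      rw [PadicInt.coe_sub, PadicInt.coe_natCast]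
    have h2 := hspec
    rw [← PadicInt.padic_norm_e_of_padicInt, hcoe] at h2
    simpa using h2
  have hrem : ‖x₀ - (m : ℚ_[p]) * y‖ ≤ 1 := by
    have heq : x₀ - (m : ℚ_[p]) * y = (x₀ / y - (m : ℚ_[p])) * y := by
      field_simp
    rw [heq, norm_mul, hy]
    calc ‖x₀ / y - (m : ℚ_[p])‖ * (p : ℝ) ≤ (p : ℝ)⁻¹ * (p : ℝ) :=
          mul_le_mul_of_nonneg_right hspec' (le_of_lt hp0)
      _ = 1 := inv_mul_cancel₀ (ne_of_gt hp0)
  have hψ0 : ψ 0 = 1 := hψtriv 0 (by simp)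
  have : ψ x₀ = 1 := by
    have hx₀eq : x₀ = (m : ℚ_[p]) * y + (x₀ - (m : ℚ_[p]) * y) := by ring
    rw [hx₀eq, hψadd, psi_nsmul ψ hψadd hψ0 y m, hψy, one_pow, one_mul]
    exact hψtriv _ hrem
  exact hx₀ne this

/-- Lemma 3.8 (k = 1 case): if `ν(a) = -1` then
`I(a,b) = ∫_{o^×} ψ(ax² + bx) dx` is nonzero only if `ν(b) ≥ -1`. -/
theorem stmt1 (p : ℕ) [Fact p.Prime] (hp : Odd p)
    [MeasurableSpace ℚ_[p]] [BorelSpace ℚ_[p]]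
    (μ : Measure ℚ_[p]) [μ.IsAddHaarMeasure]
    (hμ : μ {x : ℚ_[p] | ‖x‖ ≤ 1} = 1)
    (ψ : ℚ_[p] → ℂ)
    (hψadd : ∀ x y : ℚ_[p], ψ (x + y) = ψ x * ψ y)
    (hψtriv : ∀ x : ℚ_[p], ‖x‖ ≤ 1 → ψ x = 1)
    (hψnontriv : ∃ x : ℚ_[p], ‖x‖ ≤ (p : ℝ) ∧ ψ x ≠ 1)
    (a b : ℚ_[p]) (ha : a.valuation = -1) :
    (∫ x in {x : ℚ_[p] | ‖x‖ = 1}, ψ (a * x ^ 2 + b * x) ∂μ) ≠ 0 →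
      -1 ≤ b.valuation := by
  intro hI
  by_contra hb
  push_neg at hb
  have hb2 : b.valuation ≤ -2 := by omega
  have hP : (1 : ℝ) < p := by exact_mod_cast (Fact.out : p.Prime).one_lt
  have hP0 : (0 : ℝ) < p := lt_trans one_pos hP
  have hPne : (p : ℝ) ≠ 0 := ne_of_gt hP0
  have hbne : b ≠ 0 := by
    intro h; rw [h, Padic.valuation_zero] at hb; omega
  have hane : a ≠ 0 := by
    intro h; rw [h, Padic.valuation_zero] at ha; omega
  set t : ℚ_[p] := (p : ℚ_[p]) ^ (-1 - b.valuation) with htdef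
  have hat : ‖t‖ = (p : ℝ) ^ (1 + b.valuation) := by
    rw [htdef, Padic.norm_p_zpow]; congr 1; ring
  have htlt : ‖t‖ ≤ (p : ℝ) ^ (-1 : ℤ) := by
    rw [hat]
    exact zpow_le_zpow_right₀ (le_of_lt hP) (by omega)
  have htlt1 : ‖t‖ < 1 := lt_of_le_of_lt htlt (by
    rw [zpow_neg_one]
    exact inv_lt_one_of_one_lt₀ hP)
  have hna : ‖a‖ = (p : ℝ) := by
    rw [Padic.norm_eq_zpow_neg_valuation hane, ha]; norm_num
  have hbt : ‖b * t‖ = (p : ℝ) := by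
    rw [norm_mul, Padic.norm_eq_zpow_neg_valuation hbne, hat, ← zpow_add₀ hPne]
    norm_num
  have hψbt : ψ (b * t) ≠ 1 :=
    psi_ne_one_of_norm_eq ψ hψadd hψtriv hψnontriv _ hbt
  set S : Set ℚ_[p] := {x : ℚ_[p] | ‖x‖ = 1} with hSdef
  have hS : MeasurableSet S := by
    have : S = (fun x : ℚ_[p] => ‖x‖) ⁻¹' {1} := rfl
    rw [this]
    exact measurable_norm (measurableSet_singleton 1)
  set f : ℚ_[p] → ℂ := fun x => ψ (a * x ^ 2 + b * x) with hfdef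
  -- membership invariance
  have hmem : ∀ x : ℚ_[p], x + t ∈ S ↔ x ∈ S := by
    intro x
    constructor
    · intro hx
      have hx' : ‖x + t‖ = 1 := hx
      have hne : ‖x + t‖ ≠ ‖-t‖ := by
        rw [norm_neg, hx']; exact ne_of_gt htlt1
      have hkey : ‖x‖ = max ‖x + t‖ ‖-t‖ := by
        rw [← Padic.add_eq_max_of_ne hne]; congr 1; ring
      show ‖x‖ = 1
      rw [hkey, norm_neg, hx', max_eq_left (le_of_lt htlt1)]
    · intro hx
      have hx' : ‖x‖ = 1 := hx
      have hne : ‖x‖ ≠ ‖t‖ := by rw [hx']; exact ne_of_gt htlt1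
      show ‖x + t‖ = 1
      rw [Padic.add_eq_max_of_ne hne, hx', max_eq_left (le_of_lt htlt1)]
  -- pointwise identity
  have hpoint : ∀ x : ℚ_[p], S.indicator f (x + t) = ψ (b * t) * S.indicator f x := by
    intro x
    by_cases hx : x ∈ S
    · rw [Set.indicator_of_mem ((hmem x).mpr hx), Set.indicator_of_mem hx]
      have hxnorm : ‖x‖ = 1 := hx
      have hexp : a * (x + t) ^ 2 + b * (x + t)
          = (a * x ^ 2 + b * x) + ((2 * a * t * x + a * t ^ 2) + b * t) := by ring
      have hmid : ‖2 * a * t * x + a * t ^ 2‖ ≤ 1 := by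
        refine le_trans (Padic.nonarchimedean _ _) (max_le ?_ ?_)
        · have h2 : ‖(2 : ℚ_[p])‖ ≤ 1 := by
            have := Padic.norm_int_le_one (p := p) 2
            simpa using this
          calc ‖2 * a * t * x‖ = ‖(2:ℚ_[p])‖ * ‖a‖ * ‖t‖ * ‖x‖ := by
                rw [norm_mul, norm_mul, norm_mul]
            _ ≤ 1 * (p : ℝ) * ((p : ℝ) ^ (-1 : ℤ)) * 1 := by
                apply mul_le_mul _ (le_of_eq hxnorm) (norm_nonneg x)
                · positivity
                · exact mul_le_mul (mul_le_mul h2 (le_of_eq hna) (norm_nonneg a)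
                    (by positivity)) htlt (norm_nonneg t) (by positivity)
            _ = 1 := by
                rw [one_mul, mul_one, zpow_neg_one, mul_inv_cancel₀ hPne]
        · have hsq : ((p:ℝ) ^ (1 + b.valuation)) ^ 2
              = (p : ℝ) ^ (2 * (1 + b.valuation)) := by
            rw [← zpow_natCast ((p:ℝ) ^ (1 + b.valuation)) 2, ← zpow_mul]
            congr 1; push_cast; ring
          calc ‖a * t ^ 2‖ = ‖a‖ * ‖t‖ ^ 2 := by rw [norm_mul, norm_pow]
            _ = (p : ℝ) * ((p : ℝ) ^ (2 * (1 + b.valuation))) := by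
                rw [hna, hat, hsq]
            _ = (p : ℝ) ^ (1 + 2 * (1 + b.valuation)) := by
                rw [zpow_add₀ hPne, zpow_one]
            _ ≤ (p : ℝ) ^ (0 : ℤ) := zpow_le_zpow_right₀ (le_of_lt hP) (by omega)
            _ = 1 := zpow_zero _
      show ψ (a * (x + t) ^ 2 + b * (x + t)) = ψ (b * t) * ψ (a * x ^ 2 + b * x)
      rw [hexp, hψadd (a * x ^ 2 + b * x), hψadd (2 * a * t * x + a * t ^ 2),
        hψtriv _ hmid, one_mul]
      ring
    · rw [Set.indicator_of_notMem (fun h => hx ((hmem x).mp h)),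
        Set.indicator_of_notMem hx, mul_zero]
  -- translation invariance
  have hI' : (∫ x, S.indicator f x ∂μ) ≠ 0 := by
    rw [integral_indicator hS]; exact hI
  have key : (∫ x, S.indicator f x ∂μ) = ψ (b * t) * ∫ x, S.indicator f x ∂μ := by
    calc (∫ x, S.indicator f x ∂μ) = ∫ x, S.indicator f (x + t) ∂μ :=
          (integral_add_right_eq_self (S.indicator f) t).symm
      _ = ∫ x, ψ (b * t) * S.indicator f x ∂μ := by simp_rw [hpoint]
      _ = ψ (b * t) * ∫ x, S.indicator f x ∂μ := integral_const_mul _ _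
  have : ψ (b * t) = 1 := by
    have h1 : ψ (b * t) * (∫ x, S.indicator f x ∂μ)
        = 1 * (∫ x, S.indicator f x ∂μ) := by rw [one_mul, ← key]
    exact mul_right_cancel₀ hI' h1
  exact hψbt this
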